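/- Let E be a normed space, 1 ≤ p ≤ q < ∞, and assume the composition operator C_f generated by f : E → E maps BV_p([a,b],E) into BV_q([a,b],E). Then C_f is locally bounded if and only if f is Hölder continuous on bounded subsets of E with exponent p/q. -/

import Mathlib

open scoped ENNReal NNReal

noncomputable def pVar {E : Type*} [NormedAddCommGroup E] (p a b : ℝ) (x : ℝ → E) : ℝ≥0∞ :=
  ⨆ (n : ℕ) (t : Fin (n + 1) → ℝ) (_ : StrictMono t) (_ : t 0 = a)
    (_ : t (Fin.last n) = b),
    ∑ i : Fin n, (‖x (t i.succ) - x (t i.castSucc)‖₊ : ℝ≥0∞) ^ p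

section Aux

variable {E : Type*} [NormedAddCommGroup E]


lemma le_pVar (p a b : ℝ) (x : ℝ → E) {n : ℕ}
    (t : Fin (n + 1) → ℝ) (ht : StrictMono t) (h0 : t 0 = a) (hl : t (Fin.last n) = b) :
    ∑ i : Fin n, (‖x (t i.succ) - x (t i.castSucc)‖₊ : ℝ≥0∞) ^ p ≤ pVar p a b x :=
  le_iSup_of_le n <| le_iSup_of_le t <| le_iSup_of_le ht <| le_iSup_of_le h0 <|
    le_iSup_of_le hl le_rfl

lemma pVar_le {p a b : ℝ} {x : ℝ → E} {M : ℝ≥0∞}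
    (h : ∀ (n : ℕ) (t : Fin (n + 1) → ℝ), StrictMono t → t 0 = a → t (Fin.last n) = b →
      ∑ i : Fin n, (‖x (t i.succ) - x (t i.castSucc)‖₊ : ℝ≥0∞) ^ p ≤ M) :
    pVar p a b x ≤ M := by
  simp only [pVar, iSup_le_iff]; exact h

lemma pVar_const {p a b : ℝ} (hp : 0 < p) (c : E) : pVar p a b (fun _ => c) = 0 := by
  refine le_antisymm (pVar_le ?_) zero_le
  intro n t _ _ _
  simp [ENNReal.zero_rpow_of_pos hp]


lemma mem_Icc_of_part {a b : ℝ} {n : ℕ} {t : Fin (n + 1) → ℝ} (ht : StrictMono t)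
    (h0 : t 0 = a) (hl : t (Fin.last n) = b) (i : Fin (n + 1)) : t i ∈ Set.Icc a b :=
  ⟨h0 ▸ ht.monotone (Fin.zero_le i), hl ▸ ht.monotone (Fin.le_last i)⟩


lemma pVar_comp_le {p q a b : ℝ} (x g : ℝ → E) (C : ℝ≥0∞)
    (h : ∀ s ∈ Set.Icc a b, ∀ t ∈ Set.Icc a b,
      (‖g s - g t‖₊ : ℝ≥0∞) ^ q ≤ C * (‖x s - x t‖₊ : ℝ≥0∞) ^ p) :
    pVar q a b g ≤ C * pVar p a b x := by
  refine pVar_le fun n t ht h0 hl => ?_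
  calc ∑ i : Fin n, (‖g (t i.succ) - g (t i.castSucc)‖₊ : ℝ≥0∞) ^ q
      ≤ ∑ i : Fin n, C * (‖x (t i.succ) - x (t i.castSucc)‖₊ : ℝ≥0∞) ^ p :=
        Finset.sum_le_sum fun i _ => h _ (mem_Icc_of_part ht h0 hl _) _ (mem_Icc_of_part ht h0 hl _)
    _ = C * ∑ i : Fin n, (‖x (t i.succ) - x (t i.castSucc)‖₊ : ℝ≥0∞) ^ p := by
        rw [Finset.mul_sum]
    _ ≤ C * pVar p a b x := mul_le_mul_right (le_pVar p a b x t ht h0 hl) C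

lemma single_le_pVar {p a b : ℝ} (hp : 0 < p) (hab : a < b) (x : ℝ → E) {s : ℝ}
    (hs : s ∈ Set.Icc a b) : (‖x s - x a‖₊ : ℝ≥0∞) ^ p ≤ pVar p a b x := by
  rcases eq_or_lt_of_le hs.1 with h1 | h1
  · simp [← h1, ENNReal.zero_rpow_of_pos hp]
  rcases eq_or_lt_of_le hs.2 with h2 | h2
  · -- s = b : partition ![a, b]
    have := le_pVar p a b x (![a, b]) ?_ rfl rfl
    · simpa [Fin.sum_univ_succ, h2] using this
    · rw [Fin.strictMono_iff_lt_succ]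
      intro i
      fin_cases i <;> simpa
  · -- a < s < b : partition ![a, s, b]
    have hle := le_pVar p a b x (![a, s, b]) ?_ rfl rfl
    · refine le_trans ?_ hle
      rw [Fin.sum_univ_succ, Fin.sum_univ_succ]
      simp only [Fin.sum_univ_zero, add_zero]
      have : (‖x (![a, s, b] (0:Fin 2).succ) - x (![a, s, b] (0:Fin 2).castSucc)‖₊ : ℝ≥0∞) ^ p
          = (‖x s - x a‖₊ : ℝ≥0∞) ^ p := by norm_num
      rw [this]
      exact le_self_add
    · rw [Fin.strictMono_iff_lt_succ]
      intro i
      fin_cases i <;> simpa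


theorem bwd (p q a b : ℝ) (hp : 1 ≤ p) (hpq : p ≤ q) (hab : a < b) (f : E → E)
    (hH : ∀ K : Set E, Bornology.IsBounded K → ∃ L : ℝ, 0 ≤ L ∧
        ∀ u ∈ K, ∀ w ∈ K, ‖f u - f w‖ ≤ L * ‖u - w‖ ^ (p / q)) :
    ∀ r : ℝ, 0 < r → ∃ M : ℝ, ∀ x : ℝ → E, pVar p a b x ≠ ⊤ →
        ‖x a‖ + (pVar p a b x).toReal ^ (1 / p) ≤ r →
        ‖f (x a)‖ + (pVar q a b (fun t => f (x t))).toReal ^ (1 / q) ≤ M := by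
  intro r hr
  have hp0 : 0 < p := lt_of_lt_of_le one_pos hp
  have hq0 : 0 < q := lt_of_lt_of_le hp0 hpq
  obtain ⟨L, hL0, hL⟩ := hH (Metric.closedBall 0 r) Metric.isBounded_closedBall
  refine ⟨‖f 0‖ + L * r ^ (p/q) + L * r ^ (p/q), ?_⟩
  intro x hx hxr
  set vr := (pVar p a b x).toReal with hvr
  have hvr0 : 0 ≤ vr := ENNReal.toReal_nonneg
  have hvrp0 : (0:ℝ) ≤ vr ^ (1/p) := Real.rpow_nonneg hvr0 _
  have hxa : ‖x a‖ ≤ r := by linarith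
  have hmem : ∀ s ∈ Set.Icc a b, x s ∈ Metric.closedBall (0:E) r := by
    intro s hs
    have h1 : (‖x s - x a‖₊ : ℝ≥0∞) ^ p ≤ pVar p a b x := single_le_pVar hp0 hab x hs
    have h2 : ‖x s - x a‖ ^ p ≤ vr := by
      have := ENNReal.toReal_mono hx h1
      rwa [← ENNReal.toReal_rpow, ENNReal.coe_toReal, coe_nnnorm] at this
    have h3 : ‖x s - x a‖ ≤ vr ^ (1/p) := by
      have h4 : (‖x s - x a‖ ^ p) ^ (1/p) ≤ vr ^ (1/p) :=
        Real.rpow_le_rpow (Real.rpow_nonneg (norm_nonneg _) _) h2 (by positivity)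
      rwa [← Real.rpow_mul (norm_nonneg _), mul_one_div, div_self hp0.ne', Real.rpow_one] at h4
    rw [Metric.mem_closedBall, dist_zero_right]
    calc ‖x s‖ ≤ ‖x a‖ + ‖x s - x a‖ := by
          simpa using norm_add_le (x a) (x s - x a)
      _ ≤ r := by linarith
  have hpt : ∀ s ∈ Set.Icc a b, ∀ t ∈ Set.Icc a b,
      (‖f (x s) - f (x t)‖₊ : ℝ≥0∞) ^ q ≤ ENNReal.ofReal (L ^ q) * (‖x s - x t‖₊ : ℝ≥0∞) ^ p := by
    intro s hs t ht
    have h1 : ‖f (x s) - f (x t)‖ ≤ L * ‖x s - x t‖ ^ (p/q) := hL _ (hmem s hs) _ (hmem t ht)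
    have h2 : ‖f (x s) - f (x t)‖ ^ q ≤ L ^ q * ‖x s - x t‖ ^ p := by
      calc ‖f (x s) - f (x t)‖ ^ q ≤ (L * ‖x s - x t‖ ^ (p/q)) ^ q :=
            Real.rpow_le_rpow (norm_nonneg _) h1 hq0.le
        _ = L ^ q * ‖x s - x t‖ ^ p := by
            rw [Real.mul_rpow hL0 (Real.rpow_nonneg (norm_nonneg _) _),
              ← Real.rpow_mul (norm_nonneg _), div_mul_cancel₀ _ hq0.ne']
    calc (‖f (x s) - f (x t)‖₊ : ℝ≥0∞) ^ q = ENNReal.ofReal (‖f (x s) - f (x t)‖ ^ q) := by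
          rw [← enorm_eq_nnnorm, ← ofReal_norm, ← ENNReal.ofReal_rpow_of_nonneg (norm_nonneg _) hq0.le]
      _ ≤ ENNReal.ofReal (L ^ q * ‖x s - x t‖ ^ p) := ENNReal.ofReal_le_ofReal h2
      _ = ENNReal.ofReal (L ^ q) * ENNReal.ofReal (‖x s - x t‖ ^ p) :=
          ENNReal.ofReal_mul (by positivity)
      _ = ENNReal.ofReal (L ^ q) * (‖x s - x t‖₊ : ℝ≥0∞) ^ p := by
          rw [← enorm_eq_nnnorm, ← ofReal_norm, ← ENNReal.ofReal_rpow_of_nonneg (norm_nonneg _) hp0.le]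
  have hcomp : pVar q a b (fun t => f (x t)) ≤ ENNReal.ofReal (L ^ q) * pVar p a b x :=
    pVar_comp_le x _ _ hpt
  have hfin : ENNReal.ofReal (L ^ q) * pVar p a b x ≠ ⊤ :=
    ENNReal.mul_ne_top ENNReal.ofReal_ne_top hx
  have h5 : (pVar q a b (fun t => f (x t))).toReal ≤ L ^ q * vr := by
    have := ENNReal.toReal_mono hfin hcomp
    rwa [ENNReal.toReal_mul, ENNReal.toReal_ofReal (by positivity)] at this
  have hvrq : vr ^ (1/q) ≤ r ^ (p/q) := by
    have hvrp : vr ≤ r ^ p := by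
      have h4 : (vr ^ (1/p)) ^ p ≤ r ^ p :=
        Real.rpow_le_rpow hvrp0 (by linarith [norm_nonneg (x a)]) hp0.le
      rwa [← Real.rpow_mul hvr0, one_div_mul_cancel hp0.ne', Real.rpow_one] at h4
    calc vr ^ (1/q) ≤ (r ^ p) ^ (1/q) := Real.rpow_le_rpow hvr0 hvrp (by positivity)
      _ = r ^ (p/q) := by rw [← Real.rpow_mul hr.le, mul_one_div]
  have h6 : (pVar q a b (fun t => f (x t))).toReal ^ (1/q) ≤ L * r ^ (p/q) := by
    have h7 : (pVar q a b (fun t => f (x t))).toReal ^ (1/q) ≤ (L ^ q * vr) ^ (1/q) :=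
      Real.rpow_le_rpow ENNReal.toReal_nonneg h5 (by positivity)
    have h8 : (L ^ q * vr) ^ (1/q) = L * vr ^ (1/q) := by
      rw [Real.mul_rpow (Real.rpow_nonneg hL0 _) hvr0, ← Real.rpow_mul hL0,
        mul_one_div, div_self hq0.ne', Real.rpow_one]
    calc (pVar q a b (fun t => f (x t))).toReal ^ (1/q) ≤ L * vr ^ (1/q) := h8 ▸ h7
      _ ≤ L * r ^ (p/q) := mul_le_mul_of_nonneg_left hvrq hL0
  have hfa : ‖f (x a)‖ ≤ ‖f 0‖ + L * r ^ (p/q) := by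
    have h0K : (0:E) ∈ Metric.closedBall (0:E) r := by simp [hr.le]
    have haK : x a ∈ Metric.closedBall (0:E) r := hmem a ⟨le_refl a, hab.le⟩
    have h11 : ‖f (x a) - f 0‖ ≤ L * ‖x a - 0‖ ^ (p/q) := hL _ haK _ h0K
    have h10 : ‖x a - 0‖ ^ (p/q) ≤ r ^ (p/q) :=
      Real.rpow_le_rpow (norm_nonneg _) (by simpa using hxa) (by positivity)
    have h12 : ‖f (x a)‖ ≤ ‖f 0‖ + ‖f (x a) - f 0‖ := by
      simpa using norm_add_le (f 0) (f (x a) - f 0)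
    have h13 : L * ‖x a - 0‖ ^ (p/q) ≤ L * r ^ (p/q) := mul_le_mul_of_nonneg_left h10 hL0
    linarith
  linarith

set_option maxHeartbeats 1000000 in
theorem fwd (p q a b : ℝ) (hp : 1 ≤ p) (hpq : p ≤ q) (hab : a < b) (f : E → E)
    (hf : ∀ x : ℝ → E, pVar p a b x ≠ ⊤ → pVar q a b (fun t => f (x t)) ≠ ⊤)
    (hlb : ∀ r : ℝ, 0 < r → ∃ M : ℝ, ∀ x : ℝ → E, pVar p a b x ≠ ⊤ →
        ‖x a‖ + (pVar p a b x).toReal ^ (1 / p) ≤ r →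
        ‖f (x a)‖ + (pVar q a b (fun t => f (x t))).toReal ^ (1 / q) ≤ M) :
    ∀ K : Set E, Bornology.IsBounded K → ∃ L : ℝ, 0 ≤ L ∧
        ∀ u ∈ K, ∀ w ∈ K, ‖f u - f w‖ ≤ L * ‖u - w‖ ^ (p / q) := by
  intro K hK
  have hp0 : 0 < p := lt_of_lt_of_le one_pos hp
  have hq0 : 0 < q := lt_of_lt_of_le hp0 hpq
  obtain ⟨r0, hr0⟩ := hK.subset_closedBall 0
  set r' := max r0 1 with hr'def
  have hr' : (0:ℝ) < r' := lt_of_lt_of_le one_pos (le_max_right _ _)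
  have hKsub : K ⊆ Metric.closedBall 0 r' :=
    hr0.trans (Metric.closedBall_subset_closedBall (le_max_left _ _))
  set C := 4 * r' with hCdef
  have hC : (0:ℝ) < C := by positivity
  obtain ⟨M, hM⟩ := hlb (r' + C) (by positivity)
  have hM0 : 0 ≤ M := by
    have h1 := hM (fun _ => (0:E)) (by rw [pVar_const hp0]; exact ENNReal.zero_ne_top) ?_
    · exact le_trans (add_nonneg (norm_nonneg _)
        (Real.rpow_nonneg ENNReal.toReal_nonneg _)) h1
    · rw [pVar_const hp0]
      simp only [norm_zero, ENNReal.toReal_zero, zero_add]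
      rw [Real.zero_rpow (by positivity : (1:ℝ)/p ≠ 0)]
      positivity
  refine ⟨M * 2 ^ (1/q) / C ^ (p/q),
    div_nonneg (mul_nonneg hM0 (Real.rpow_nonneg (by norm_num) _))
      (Real.rpow_nonneg hC.le _), ?_⟩
  intro u hu w hw
  by_cases huw : u = w
  · rw [huw]
    simp [Real.zero_rpow (show p/q ≠ 0 by positivity)]
  set d := ‖u - w‖ with hd
  set Dr := ‖f u - f w‖ with hDr
  have hd0 : 0 < d := by rw [hd]; exact norm_pos_iff.2 (sub_ne_zero.2 huw)
  have hu' := hKsub hu; have hw' := hKsub hw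
  rw [Metric.mem_closedBall, dist_zero_right] at hu' hw'
  have hd2 : d ≤ 2 * r' := by
    have := norm_sub_le u w
    rw [← hd] at this; linarith
  set X := C ^ p / (2 * d ^ p) with hX
  have hdp0 : (0:ℝ) < d ^ p := Real.rpow_pos_of_pos hd0 p
  have hX1 : 1 ≤ X := by
    rw [hX, le_div_iff₀ (by positivity)]
    have h1 : d ^ p ≤ (2*r') ^ p := Real.rpow_le_rpow hd0.le hd2 hp0.le
    have h2 : (2:ℝ) * (2*r')^p ≤ C ^ p := by
      have he : C = 2 * (2 * r') := by rw [hCdef]; ring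
      have h3 : (2:ℝ) ≤ 2 ^ p := by
        calc (2:ℝ) = 2 ^ (1:ℝ) := (Real.rpow_one 2).symm
          _ ≤ 2 ^ p := Real.rpow_le_rpow_of_exponent_le one_le_two hp
      calc (2:ℝ) * (2*r')^p ≤ 2 ^ p * (2*r')^p := by
            nlinarith [Real.rpow_pos_of_pos (show (0:ℝ) < 2*r' by positivity) p]
        _ = (2*(2*r'))^p := (Real.mul_rpow (by norm_num) (by positivity)).symm
        _ = C ^ p := by rw [← he]
    linarith
  set n := ⌊X⌋₊ with hn
  have hn1 : 1 ≤ n := Nat.le_floor (by exact_mod_cast hX1)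
  have hnX : (n:ℝ) ≤ X := Nat.floor_le (by linarith)
  have hXn : X ≤ 2 * (n:ℝ) := by
    have h1 : X < n + 1 := Nat.lt_floor_add_one X
    have hn1' : (1:ℝ) ≤ n := by exact_mod_cast hn1
    linarith
  -- the grid
  set N := 2 * n with hN
  have hN2 : (2:ℝ) ≤ (N:ℝ) := by
    rw [hN]; push_cast
    have : (1:ℝ) ≤ n := by exact_mod_cast hn1
    linarith
  set δ := (b - a) / ((N:ℝ) + 1) with hδdef
  have hδ : 0 < δ := div_pos (by linarith) (by positivity)
  set g : ℕ → ℝ := fun k => a + k * δ with hg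
  have hgmono : StrictMono g := by
    intro k l hkl
    simp only [hg]
    have : (k:ℝ) < l := by exact_mod_cast hkl
    nlinarith
  have hginj : Function.Injective g := hgmono.injective
  set P : ℝ → Prop := fun s => ∃ j, j < n ∧ s = g (2*j+1) with hP
  set x : ℝ → E := fun s => @ite _ (P s) (Classical.propDecidable _) u w with hxdef
  have hxu : ∀ k : ℕ, (∃ j, j < n ∧ k = 2*j+1) → x (g k) = u := by
    rintro k ⟨j, hj, rfl⟩
    simp only [hxdef]
    rw [if_pos ⟨j, hj, rfl⟩]
  have hxw : ∀ s : ℝ, ¬ P s → x s = w := by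
    intro s hs; simp only [hxdef]; rw [if_neg hs]
  have hPg : ∀ k : ℕ, P (g k) → ∃ j, j < n ∧ k = 2*j+1 := by
    rintro k ⟨j, hj, hk⟩
    exact ⟨j, hj, hginj hk⟩
  -- upper bound for pVar p x
  set dp := (‖u - w‖₊ : ℝ≥0∞) ^ p with hdp
  have hxval : ∀ s : ℝ, x s = u ∨ x s = w := by
    intro s; simp only [hxdef]
    by_cases h : P s
    · left; rw [if_pos h]
    · right; rw [if_neg h]
  have hxd : ∀ s t : ℝ, (‖x s - x t‖₊ : ℝ≥0∞) ^ p ≤ dp := by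
    intro s t
    rcases hxval s with h1 | h1 <;> rcases hxval t with h2 | h2 <;> rw [h1, h2, hdp]
    · rw [sub_self]
      simp [ENNReal.zero_rpow_of_pos hp0]
    · rw [← neg_sub u w, nnnorm_neg]
    · rw [sub_self]
      simp [ENNReal.zero_rpow_of_pos hp0]
  have hup : pVar p a b x ≤ (N : ℝ≥0∞) * dp := by
    refine pVar_le fun m t ht h0 hl => ?_
    classical
    have hterm : ∀ i : Fin m, (‖x (t i.succ) - x (t i.castSucc)‖₊ : ℝ≥0∞) ^ p ≤
        (if P (t i.succ) then dp else 0) + (if P (t i.castSucc) then dp else 0) := by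
      intro i
      by_cases h1 : P (t i.succ)
      · rw [if_pos h1]
        exact le_trans (hxd _ _) le_self_add
      · by_cases h2 : P (t i.castSucc)
        · rw [if_neg h1, if_pos h2]
          exact le_trans (hxd _ _) le_add_self
        · rw [if_neg h1, if_neg h2, hxw _ h1, hxw _ h2, sub_self]
          simp [ENNReal.zero_rpow_of_pos hp0]
    have hcard : ∀ (F : Fin m → Fin (m+1)), Function.Injective F →
        (Finset.univ.filter fun i => P (t (F i))).card ≤ n := by
      intro F hF
      have := Finset.card_le_card_of_injOn
        (s := Finset.univ.filter fun i => P (t (F i)))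
        (f := fun i => if h : P (t (F i)) then Classical.choose h else 0)
        (t := Finset.range n) ?_ ?_
      · simpa using this
      · intro i hi
        rw [Finset.mem_coe, Finset.mem_filter] at hi
        simp only []
        rw [dif_pos hi.2]
        exact Finset.mem_range.2 (Classical.choose_spec hi.2).1
      · intro i hi j hj hij
        rw [Finset.mem_coe, Finset.mem_filter] at hi hj
        dsimp only at hij
        rw [dif_pos hi.2, dif_pos hj.2] at hij
        have e1 : t (F i) = g (2 * Classical.choose hi.2 + 1) := (Classical.choose_spec hi.2).2
        have e2 : t (F j) = g (2 * Classical.choose hj.2 + 1) := (Classical.choose_spec hj.2).2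
        have : t (F i) = t (F j) := by rw [e1, e2, hij]
        exact hF (ht.injective this)
    calc ∑ i : Fin m, (‖x (t i.succ) - x (t i.castSucc)‖₊ : ℝ≥0∞) ^ p
        ≤ ∑ i : Fin m, ((if P (t i.succ) then dp else 0) + (if P (t i.castSucc) then dp else 0)) :=
          Finset.sum_le_sum fun i _ => hterm i
      _ = ((Finset.univ.filter fun i : Fin m => P (t i.succ)).card : ℝ≥0∞) * dp +
          ((Finset.univ.filter fun i : Fin m => P (t i.castSucc)).card : ℝ≥0∞) * dp := by
          rw [Finset.sum_add_distrib, ← Finset.sum_filter, ← Finset.sum_filter,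
            Finset.sum_const, Finset.sum_const, nsmul_eq_mul, nsmul_eq_mul]
      _ ≤ (n : ℝ≥0∞) * dp + (n : ℝ≥0∞) * dp := by
          gcongr
          · exact_mod_cast Nat.cast_le.2 (hcard _ (Fin.succ_injective m))
          · exact_mod_cast Nat.cast_le.2 (hcard _ (Fin.castSucc_injective m))
      _ = (N : ℝ≥0∞) * dp := by
          rw [← add_mul, hN]
          norm_cast
          ring
  set fx : ℝ → E := fun s => f (x s) with hfx
  set Dq := (‖f u - f w‖₊ : ℝ≥0∞) ^ q with hDq
  have hDr0 : 0 ≤ Dr := by rw [hDr]; exact norm_nonneg _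
  have htermq : ∀ k : ℕ, k < N → (‖fx (g (k+1)) - fx (g k)‖₊ : ℝ≥0∞) ^ q = Dq := by
    intro k hk
    rcases Nat.even_or_odd k with he | ho
    · obtain ⟨m, hm⟩ := he
      have h1 : x (g k) = w := by
        refine hxw _ fun hPk => ?_
        obtain ⟨j, hj, hkj⟩ := hPg _ hPk
        omega
      have h2 : x (g (k+1)) = u := hxu _ ⟨m, by omega, by omega⟩
      simp only [hfx]
      rw [h1, h2, hDq]
    · obtain ⟨m, hm⟩ := ho
      have h1 : x (g k) = u := hxu _ ⟨m, by omega, by omega⟩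
      have h2 : x (g (k+1)) = w := by
        refine hxw _ fun hPk => ?_
        obtain ⟨j, hj, hkj⟩ := hPg _ hPk
        omega
      simp only [hfx]
      rw [h1, h2, hDq, ← neg_sub (f u) (f w), nnnorm_neg]
  have hlow : (N : ℝ≥0∞) * Dq ≤ pVar q a b fx := by
    have hle := le_pVar q a b fx (n := N + 1) (fun i => g i.val) ?_ ?_ ?_
    · refine le_trans ?_ hle
      rw [Fin.sum_univ_castSucc (n := N)]
      have heach : ∀ j : Fin N,
          (‖fx ((fun i : Fin (N+1+1) => g i.val) (j.castSucc).succ) -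
            fx ((fun i : Fin (N+1+1) => g i.val) (j.castSucc).castSucc)‖₊ : ℝ≥0∞) ^ q = Dq := by
        intro j
        have e1 : (((j.castSucc).succ : Fin (N+2)) : ℕ) = j.val + 1 := by simp
        have e2 : (((j.castSucc).castSucc : Fin (N+2)) : ℕ) = j.val := by simp
        dsimp only
        rw [e1, e2]
        exact htermq j.val j.isLt
      calc (N:ℝ≥0∞) * Dq = ∑ _j : Fin N, Dq := by
            rw [Finset.sum_const, Finset.card_univ, Fintype.card_fin, nsmul_eq_mul]
        _ = ∑ j : Fin N, (‖fx ((fun i : Fin (N+1+1) => g i.val) (j.castSucc).succ) -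
            fx ((fun i : Fin (N+1+1) => g i.val) (j.castSucc).castSucc)‖₊ : ℝ≥0∞) ^ q :=
            Finset.sum_congr rfl fun j _ => (heach j).symm
        _ ≤ _ := le_self_add
    · intro i j hij
      exact hgmono hij
    · show g ((0 : Fin (N+2)) : ℕ) = a
      simp [hg]
    · show g ((Fin.last (N+1)) : ℕ) = b
      rw [Fin.val_last]
      simp only [hg, hδdef]
      have hne : ((N:ℝ)+1) ≠ 0 := by positivity
      push_cast
      field_simp
      ring
  have hdpfin : (N : ℝ≥0∞) * dp ≠ ⊤ :=
    ENNReal.mul_ne_top (ENNReal.natCast_ne_top N)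
      (ENNReal.rpow_ne_top_of_nonneg hp0.le ENNReal.coe_ne_top)
  have hxfin : pVar p a b x ≠ ⊤ := ne_top_of_le_ne_top hdpfin hup
  have hxa : x a = w := by
    refine hxw _ fun hPa => ?_
    obtain ⟨j, hj, hja⟩ := hPa
    have h1 : (1:ℝ) ≤ ((2*j+1 : ℕ):ℝ) := by exact_mod_cast Nat.one_le_iff_ne_zero.2 (by omega)
    have h2 : a < g (2*j+1) := by
      simp only [hg]
      nlinarith
    rw [← hja] at h2
    exact lt_irrefl a h2
  have htoR : (pVar p a b x).toReal ≤ (N:ℝ) * d ^ p := by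
    have h1 := ENNReal.toReal_mono hdpfin hup
    rwa [ENNReal.toReal_mul, ENNReal.toReal_natCast, hdp, ← ENNReal.toReal_rpow,
      ENNReal.coe_toReal, coe_nnnorm, ← hd] at h1
  have hNd : (N:ℝ) * d ^ p ≤ C ^ p := by
    have hNn : (N:ℝ) = 2 * (n:ℝ) := by rw [hN]; push_cast; ring
    rw [hNn]
    calc 2 * (n:ℝ) * d ^ p ≤ 2 * X * d ^ p :=
          mul_le_mul_of_nonneg_right (by linarith : 2 * (n:ℝ) ≤ 2 * X) hdp0.le
      _ = C ^ p := by rw [hX]; field_simp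
  have hnorm : ‖x a‖ + (pVar p a b x).toReal ^ (1/p) ≤ r' + C := by
    have h3 : (pVar p a b x).toReal ^ (1/p) ≤ C := by
      calc (pVar p a b x).toReal ^ (1/p) ≤ (C ^ p) ^ (1/p) :=
            Real.rpow_le_rpow ENNReal.toReal_nonneg (le_trans htoR hNd) (by positivity)
        _ = C := by rw [← Real.rpow_mul hC.le, mul_one_div, div_self hp0.ne', Real.rpow_one]
    rw [hxa]
    linarith
  have hMx := hM x hxfin hnorm
  have hgfin : pVar q a b fx ≠ ⊤ := hf x hxfin
  have hDle : (N:ℝ) * Dr ^ q ≤ (pVar q a b fx).toReal := by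
    have h1 := ENNReal.toReal_mono hgfin hlow
    rwa [ENNReal.toReal_mul, ENNReal.toReal_natCast, hDq, ← ENNReal.toReal_rpow,
      ENNReal.coe_toReal, coe_nnnorm, ← hDr] at h1
  have hVM : (pVar q a b fx).toReal ^ (1/q) ≤ M := by
    have heq : pVar q a b (fun t => f (x t)) = pVar q a b fx := rfl
    rw [heq] at hMx
    linarith [norm_nonneg (f (x a))]
  have hND : (N:ℝ)^(1/q) * Dr ≤ M := by
    have h1 : ((N:ℝ) * Dr ^ q) ^ (1/q) ≤ M :=
      le_trans (Real.rpow_le_rpow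
        (mul_nonneg (Nat.cast_nonneg N) (Real.rpow_nonneg hDr0 q)) hDle (by positivity)) hVM
    rwa [Real.mul_rpow (Nat.cast_nonneg N) (Real.rpow_nonneg hDr0 q),
      ← Real.rpow_mul hDr0, mul_one_div, div_self hq0.ne', Real.rpow_one] at h1
  have hCN : C ^ p ≤ 2 * (N:ℝ) * d ^ p := by
    have h1 : X ≤ (N:ℝ) := by
      rw [hN]; push_cast; linarith [hXn]
    rw [hX, div_le_iff₀ (by positivity : (0:ℝ) < 2 * d ^ p)] at h1
    linarith
  have hfinal : C ^ (p/q) ≤ 2 ^ (1/q) * (N:ℝ)^(1/q) * d ^ (p/q) := by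
    have h1 : (C^p)^(1/q) ≤ (2 * (N:ℝ) * d^p)^(1/q) :=
      Real.rpow_le_rpow (Real.rpow_nonneg hC.le p) hCN (by positivity)
    rw [← Real.rpow_mul hC.le, mul_one_div] at h1
    rw [Real.mul_rpow (by positivity : (0:ℝ) ≤ 2 * (N:ℝ)) (Real.rpow_nonneg hd0.le p),
      Real.mul_rpow (by norm_num : (0:ℝ) ≤ 2) (Nat.cast_nonneg N),
      ← Real.rpow_mul hd0.le, mul_one_div] at h1
    exact h1
  have hCpq0 : (0:ℝ) < C ^ (p/q) := Real.rpow_pos_of_pos hC _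
  have hDrC : Dr * C ^ (p/q) ≤ M * 2 ^ (1/q) * d ^ (p/q) := by
    calc Dr * C ^ (p/q) ≤ Dr * (2 ^ (1/q) * (N:ℝ)^(1/q) * d ^ (p/q)) :=
          mul_le_mul_of_nonneg_left hfinal hDr0
      _ = ((N:ℝ)^(1/q) * Dr) * (2 ^ (1/q) * d ^ (p/q)) := by ring
      _ ≤ M * (2 ^ (1/q) * d ^ (p/q)) :=
          mul_le_mul_of_nonneg_right hND
            (mul_nonneg (Real.rpow_nonneg (by norm_num) _) (Real.rpow_nonneg hd0.le _))
      _ = M * 2 ^ (1/q) * d ^ (p/q) := by ring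
  rw [div_mul_eq_mul_div, le_div_iff₀ hCpq0]
  exact hDrC

end Aux


/-- Assume the composition operator `C_f` maps `BV_p([a,b],E)` into `BV_q([a,b],E)`.
Then `C_f` is locally bounded if and only if `f` is Hölder continuous with exponent
`p/q` on every bounded subset of `E`. -/
theorem comp_locally_bounded_iff_holder_on_bounded {E : Type*} [NormedAddCommGroup E]
    (p q a b : ℝ) (hp : 1 ≤ p) (hpq : p ≤ q) (hab : a < b)
    (f : E → E)
    (hf : ∀ x : ℝ → E, pVar p a b x ≠ ⊤ → pVar q a b (fun t => f (x t)) ≠ ⊤) :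
    (∀ r : ℝ, 0 < r → ∃ M : ℝ, ∀ x : ℝ → E, pVar p a b x ≠ ⊤ →
        ‖x a‖ + (pVar p a b x).toReal ^ (1 / p) ≤ r →
        ‖f (x a)‖ + (pVar q a b (fun t => f (x t))).toReal ^ (1 / q) ≤ M) ↔
      (∀ K : Set E, Bornology.IsBounded K → ∃ L : ℝ, 0 ≤ L ∧
        ∀ u ∈ K, ∀ w ∈ K, ‖f u - f w‖ ≤ L * ‖u - w‖ ^ (p / q)) := by
  constructor
  · intro hlb
    exact fwd p q a b hp hpq hab f hf hlb
  · intro hH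
    exact bwd p q a b hp hpq hab f hH
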